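/- Let M be a real skew-symmetric d×d matrix, ∇⊥ the associated first-order operator, and ψ a C³ complex-valued function on ℝ^d. Set A₀ = ∇⊥(ψ²), the vector field with components Σ_j M_{ij} ∂_j(ψ²). Then (A₀ · i∇ + i∇ · A₀)ψ = 0, i.e., Σ_i [ A₀_i · i ∂_i ψ + i ∂_i ( A₀_i ψ ) ] = 0. -/

import Mathlib

open Complex

lemma antisym_pairing {d : ℕ} (c q : Fin d → Fin d → ℂ)
    (hc : ∀ i j, c i j = - c j i) (hq : ∀ i j, q i j = q j i) :
    ∑ i, ∑ j, c i j * q i j = 0 := by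
  have h : (∑ i, ∑ j, c i j * q i j) = ∑ j, ∑ i, c i j * q i j := Finset.sum_comm
  have h2 : (∑ j : Fin d, ∑ i : Fin d, c i j * q i j)
      = - ∑ i, ∑ j, c i j * q i j := by
    rw [← Finset.sum_neg_distrib]
    refine Finset.sum_congr rfl fun i _ => ?_
    rw [← Finset.sum_neg_distrib]
    refine Finset.sum_congr rfl fun j _ => ?_
    rw [hc j i, hq j i]; ring
  have h3 := h.trans h2
  linear_combination h3 / 2

theorem symmetrized_op_on_psi_eq_zero (d : ℕ) (M : Fin d → Fin d → ℝ)
    (hM : ∀ i j, M i j = - M j i)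
    (ψ : (Fin d → ℝ) → ℂ) (hψ : ContDiff ℝ 3 ψ)
    (A₀ : Fin d → (Fin d → ℝ) → ℂ)
    (hA₀ : ∀ i y, A₀ i y = ∑ j, (M i j : ℂ) * fderiv ℝ (fun z => ψ z ^ 2) y (Pi.single j 1))
    (x : Fin d → ℝ) :
    ∑ i, (A₀ i x * (Complex.I * fderiv ℝ ψ x (Pi.single i 1)) +
      Complex.I * fderiv ℝ (fun y => A₀ i y * ψ y) x (Pi.single i 1)) = 0 := by
  classical
  set f : (Fin d → ℝ) → ℂ := fun z => ψ z ^ 2 with hf_def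
  have hfC : ContDiff ℝ 3 f := hψ.pow 2
  have hψd : Differentiable ℝ ψ := hψ.differentiable (by norm_num)
  have hfd : Differentiable ℝ f := hfC.differentiable (by norm_num)
  have hf'C : ContDiff ℝ 2 (fderiv ℝ f) := hfC.fderiv_right (by norm_num)
  have hf'd : Differentiable ℝ (fderiv ℝ f) := hf'C.differentiable (by norm_num)
  -- notation
  set p : Fin d → ℂ := fun i => fderiv ℝ ψ x (Pi.single i 1) with hp_def
  set q : Fin d → Fin d → ℂ :=
    fun i j => fderiv ℝ (fderiv ℝ f) x (Pi.single i 1) (Pi.single j 1) with hq_def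
  -- symmetry of second derivative
  have hsym : ∀ i j, q i j = q j i := fun i j =>
    second_derivative_symmetric (f := f) (fun y => (hfd y).hasFDerivAt)
      ((hf'd x).hasFDerivAt) _ _
  -- first derivative of f
  have hfeq : f = fun z => ψ z * ψ z := funext fun z => by rw [hf_def]; ring
  have hfderiv : ∀ y v, fderiv ℝ f y v = 2 * ψ y * fderiv ℝ ψ y v := by
    intro y v
    have h := ((hψd y).hasFDerivAt.fun_mul (hψd y).hasFDerivAt).fderiv
    rw [hfeq, h]
    simp only [ContinuousLinearMap.add_apply, ContinuousLinearMap.smul_apply, smul_eq_mul]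
    ring
  -- derivative of y ↦ fderiv f y v
  have hg : ∀ (v : Fin d → ℝ) (y : Fin d → ℝ), HasFDerivAt (fun z => fderiv ℝ f z v)
      ((ContinuousLinearMap.apply ℝ ℂ v).comp (fderiv ℝ (fderiv ℝ f) y)) y := fun v y =>
    (ContinuousLinearMap.apply ℝ ℂ v).hasFDerivAt.comp y (hf'd y).hasFDerivAt
  -- A₀ i as explicit function
  have hAfun : ∀ i, A₀ i = fun y => ∑ j, (M i j : ℂ) * fderiv ℝ f y (Pi.single j 1) :=
    fun i => funext fun y => hA₀ i y
  have hAderiv : ∀ i, HasFDerivAt (A₀ i)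
      (∑ j, (M i j : ℂ) • ((ContinuousLinearMap.apply ℝ ℂ (Pi.single j 1)).comp
        (fderiv ℝ (fderiv ℝ f) x))) x := by
    intro i
    rw [hAfun i]
    exact HasFDerivAt.fun_sum fun j _ => (hg (Pi.single j 1) x).const_mul _
  -- value of fderiv of A₀ i * ψ
  have key : ∀ i, fderiv ℝ (fun y => A₀ i y * ψ y) x (Pi.single i 1)
      = (∑ j, (M i j : ℂ) * q i j) * ψ x + A₀ i x * p i := by
    intro i
    have h := ((hAderiv i).fun_mul (hψd x).hasFDerivAt).fderiv
    rw [h]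
    simp only [ContinuousLinearMap.add_apply, ContinuousLinearMap.smul_apply,
      ContinuousLinearMap.coe_sum', Finset.sum_apply, ContinuousLinearMap.coe_comp',
      Function.comp_apply, ContinuousLinearMap.apply_apply, smul_eq_mul]
    simp only [hq_def, hp_def]
    ring
  -- value of A₀ i x
  have hAval : ∀ i, A₀ i x = ∑ j, (M i j : ℂ) * (2 * ψ x * p j) := by
    intro i
    rw [hA₀ i x]
    refine Finset.sum_congr rfl fun j _ => ?_
    rw [hfderiv x (Pi.single j 1)]
  -- assemble
  have h1 : (∑ i, ∑ j, ((M i j : ℂ)) * (p i * p j)) = 0 :=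
    antisym_pairing _ _ (fun i j => by rw [hM i j]; push_cast; ring)
      (fun i j => by ring)
  have h2 : (∑ i, ∑ j, ((M i j : ℂ)) * q i j) = 0 :=
    antisym_pairing _ _ (fun i j => by rw [hM i j]; push_cast; ring)
      (fun i j => hsym i j)
  calc ∑ i, (A₀ i x * (Complex.I * p i) +
        Complex.I * fderiv ℝ (fun y => A₀ i y * ψ y) x (Pi.single i 1))
      = ∑ i, ((4 * Complex.I * ψ x) * (∑ j, (M i j : ℂ) * (p i * p j))
          + (Complex.I * ψ x) * (∑ j, (M i j : ℂ) * q i j)) := by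
        refine Finset.sum_congr rfl fun i _ => ?_
        rw [key i, hAval i]
        simp only [Finset.sum_mul, Finset.mul_sum, mul_add, ← Finset.sum_add_distrib]
        refine Finset.sum_congr rfl fun j _ => ?_
        ring
    _ = 0 := by
        rw [Finset.sum_add_distrib, ← Finset.mul_sum, ← Finset.mul_sum, h1, h2]
        ring
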